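/- Let G' = (V',E') be a finite simple graph, r a positive integer, G = G(G',r) the gadget graph, X = A₁ ∪ A₂ ∪ B, and γ_r = (r²+r−1)/(2r²+2r−1). If G' contains a clique of size r, then X is not a maximal γ_r-quasi-clique in G (there exists a γ_r-quasi-clique of G strictly containing X). -/

import Mathlib

open SimpleGraph Set

/-- Vertex type of the gadget graph: the original vertices `V`, plus
`A₁` and `A₂` (each of size `r²`) and `B` (of size `r`). -/
abbrev GadgetV (V : Type*) (r : ℕ) : Type _ := V ⊕ (Fin (r ^ 2) ⊕ Fin (r ^ 2) ⊕ Fin r)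

/-- Membership in `A₁`. -/
def isA1 {V : Type*} {r : ℕ} : GadgetV V r → Prop
  | Sum.inr (Sum.inl _) => True
  | _ => False

/-- Membership in `A₂`. -/
def isA2 {V : Type*} {r : ℕ} : GadgetV V r → Prop
  | Sum.inr (Sum.inr (Sum.inl _)) => True
  | _ => False

/-- Membership in `B`. -/
def isB {V : Type*} {r : ℕ} : GadgetV V r → Prop
  | Sum.inr (Sum.inr (Sum.inr _)) => True
  | _ => False

/-- The gadget graph `G(G',r)`: all edges of `G'`, `A₁`, `A₂`, `B` are cliques,
all pairs between `A₁` and `A₂`, between `A₁` and `B`, and between `A₁` and `V'`.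
(A vertex of `A₁` is adjacent to every other vertex.) -/
def gadget {V : Type*} (G' : SimpleGraph V) (r : ℕ) : SimpleGraph (GadgetV V r) :=
  SimpleGraph.fromRel fun a b =>
    isA1 a ∨ (∃ u v, a = Sum.inl u ∧ b = Sum.inl v ∧ G'.Adj u v) ∨
      (isA2 a ∧ isA2 b) ∨ (isB a ∧ isB b)

/-- The set `X = A₁ ∪ A₂ ∪ B`. -/
def Xset (V : Type*) (r : ℕ) : Set (GadgetV V r) := {x | isA1 x ∨ isA2 x ∨ isB x}

/-- Degree of a vertex `v` in the subgraph of `G` induced on `Q`: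
the number of neighbors of `v` lying in `Q`. -/
noncomputable def degIn {W : Type*} (G : SimpleGraph W) (Q : Set W) (v : W) : ℕ :=
  (Q ∩ G.neighborSet v).ncard

/-- `Q` is a `γ`-quasi-clique in `G`: the induced subgraph `G[Q]` is connected and
every vertex of `Q` has degree at least `⌈γ·(|Q|-1)⌉` in `G[Q]`. -/
def IsQuasiClique {W : Type*} (G : SimpleGraph W) (γ : ℚ) (Q : Set W) : Prop :=
  (G.induce Q).Connected ∧ ∀ v ∈ Q, ⌈γ * ((Q.ncard : ℚ) - 1)⌉ ≤ (degIn G Q v : ℤ)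

/-- `γ_r = (r²+r−1)/(2r²+2r−1)`. -/
def gammaR (r : ℕ) : ℚ := ((r : ℚ) ^ 2 + r - 1) / (2 * (r : ℚ) ^ 2 + 2 * r - 1)

section Aux

variable {V : Type*} {r : ℕ}

/-- Embedding of `A₁`. -/
def iota1 (i : Fin (r ^ 2)) : GadgetV V r := Sum.inr (Sum.inl i)

/-- Embedding of `A₂`. -/
def iota2 (i : Fin (r ^ 2)) : GadgetV V r := Sum.inr (Sum.inr (Sum.inl i))

/-- Embedding of `B`. -/
def iota3 (i : Fin r) : GadgetV V r := Sum.inr (Sum.inr (Sum.inr i))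

lemma isA1_iff (x : GadgetV V r) : isA1 x ↔ x ∈ Set.range (iota1 (V := V) (r := r)) := by
  rcases x with u | i | i | i <;> simp [isA1, iota1]

lemma isA2_iff (x : GadgetV V r) : isA2 x ↔ x ∈ Set.range (iota2 (V := V) (r := r)) := by
  rcases x with u | i | i | i <;> simp [isA2, iota2]

lemma isB_iff (x : GadgetV V r) : isB x ↔ x ∈ Set.range (iota3 (V := V) (r := r)) := by
  rcases x with u | i | i | i <;> simp [isB, iota3]

lemma Xset_eq : Xset V r =
    Set.range (iota1 (V := V) (r := r)) ∪
      (Set.range (iota2 (V := V) (r := r)) ∪ Set.range (iota3 (V := V) (r := r))) := by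
  ext x
  simp [Xset, isA1_iff, isA2_iff, isB_iff, Set.mem_union, or_assoc]

lemma inl_not_mem_Xset (u : V) : (Sum.inl u : GadgetV V r) ∉ Xset V r := by
  simp [Xset, isA1, isA2, isB]

lemma iota1_injective : Function.Injective (iota1 (V := V) (r := r)) := by
  intro i j h; simpa [iota1] using h

lemma iota2_injective : Function.Injective (iota2 (V := V) (r := r)) := by
  intro i j h; simpa [iota2] using h

lemma iota3_injective : Function.Injective (iota3 (V := V) (r := r)) := by
  intro i j h; simpa [iota3] using h

lemma ncard_range_iota1 : (Set.range (iota1 (V := V) (r := r))).ncard = r ^ 2 := by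
  rw [← Nat.card_coe_set_eq, Nat.card_range_of_injective iota1_injective]
  simp

lemma ncard_range_iota2 : (Set.range (iota2 (V := V) (r := r))).ncard = r ^ 2 := by
  rw [← Nat.card_coe_set_eq, Nat.card_range_of_injective iota2_injective]
  simp

lemma ncard_range_iota3 : (Set.range (iota3 (V := V) (r := r))).ncard = r := by
  rw [← Nat.card_coe_set_eq, Nat.card_range_of_injective iota3_injective]
  simp

variable (G' : SimpleGraph V)

lemma adj_iota1 (i : Fin (r ^ 2)) (x : GadgetV V r) :
    (gadget G' r).Adj (iota1 i) x ↔ x ≠ iota1 i := by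
  simp [gadget, iota1, isA1, ne_comm]

lemma adj_iota2 (i : Fin (r ^ 2)) (x : GadgetV V r) :
    (gadget G' r).Adj (iota2 i) x ↔ isA1 x ∨ (isA2 x ∧ x ≠ iota2 i) := by
  rcases x with u | j | j | j <;>
    simp [gadget, iota2, isA1, isA2, isB, Sum.inr.injEq, ne_comm]

lemma adj_iota3 (i : Fin r) (x : GadgetV V r) :
    (gadget G' r).Adj (iota3 i) x ↔ isA1 x ∨ (isB x ∧ x ≠ iota3 i) := by
  rcases x with u | j | j | j <;>
    simp [gadget, iota3, isA1, isA2, isB, Sum.inr.injEq, ne_comm]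

lemma adj_inl (u : V) (x : GadgetV V r) :
    (gadget G' r).Adj (Sum.inl u) x ↔ isA1 x ∨ ∃ w, x = Sum.inl w ∧ G'.Adj u w := by
  rcases x with w | j | j | j <;>
    simp [gadget, isA1, isA2, isB]
  constructor
  · rintro ⟨hne, h⟩
    rcases h with h | h
    · exact h
    · exact h.symm
  · intro h
    exact ⟨h.ne, Or.inl h⟩

end Aux

/-- If `G'` contains a clique of size `r`, then `X` is not a maximal
`γ_r`-quasi-clique in the gadget graph: there is a `γ_r`-quasi-clique strictly
containing `X`. -/
theorem stmt_6 {V : Type*} [Fintype V] (G' : SimpleGraph V) (r : ℕ) (hr : 0 < r)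
    (hclique : ∃ L : Finset V, G'.IsNClique r L) :
    ∃ Q' : Set (GadgetV V r),
      IsQuasiClique (gadget G' r) (gammaR r) Q' ∧ Xset V r ⊂ Q' := by
  classical
  obtain ⟨L, hL⟩ := hclique
  have hLne : L.Nonempty := Finset.card_pos.mp (hL.2 ▸ hr)
  obtain ⟨u0, hu0⟩ := hLne
  set Q' : Set (GadgetV V r) := Xset V r ∪ Sum.inl '' (↑L : Set V) with hQ'def
  have hsub1 : Set.range (iota1 (V := V) (r := r)) ⊆ Q' := fun x hx =>
    Or.inl (by rw [Xset_eq]; exact Or.inl hx)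
  have hsub2 : Set.range (iota2 (V := V) (r := r)) ⊆ Q' := fun x hx =>
    Or.inl (by rw [Xset_eq]; exact Or.inr (Or.inl hx))
  have hsub3 : Set.range (iota3 (V := V) (r := r)) ⊆ Q' := fun x hx =>
    Or.inl (by rw [Xset_eq]; exact Or.inr (Or.inr hx))
  -- cardinality of Q'
  have hdisj23 : Disjoint (Set.range (iota2 (V := V) (r := r))) (Set.range iota3) := by
    rw [Set.disjoint_left]; rintro _ ⟨i, rfl⟩ ⟨j, hj⟩; simp [iota2, iota3] at hj
  have hdisj123 : Disjoint (Set.range (iota1 (V := V) (r := r)))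
      (Set.range iota2 ∪ Set.range iota3) := by
    rw [Set.disjoint_left]; rintro _ ⟨i, rfl⟩ hj
    rcases hj with ⟨j, hj⟩ | ⟨j, hj⟩ <;> simp [iota1, iota2, iota3] at hj
  have hdisjXL : Disjoint (Xset V r) (Sum.inl '' (↑L : Set V)) := by
    rw [Set.disjoint_left]; rintro x hx ⟨w, hw, rfl⟩
    exact inl_not_mem_Xset w hx
  have hXcard : (Xset V r).ncard = 2 * r ^ 2 + r := by
    rw [Xset_eq, Set.ncard_union_eq hdisj123 (Set.toFinite _) (Set.toFinite _),
      Set.ncard_union_eq hdisj23 (Set.toFinite _) (Set.toFinite _),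
      ncard_range_iota1, ncard_range_iota2, ncard_range_iota3]
    ring
  have hLcard : (Sum.inl '' (↑L : Set V) : Set (GadgetV V r)).ncard = r := by
    rw [Set.ncard_image_of_injective _ Sum.inl_injective, Set.ncard_coe_finset, hL.2]
  have hQcard : Q'.ncard = 2 * r ^ 2 + 2 * r := by
    rw [hQ'def, Set.ncard_union_eq hdisjXL (Set.toFinite _) (Set.toFinite _), hXcard, hLcard]
    ring
  -- the ceiling value
  have hceil : ⌈gammaR r * ((Q'.ncard : ℚ) - 1)⌉ = ((r ^ 2 : ℕ) : ℤ) + r - 1 := by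
    have hr1 : (1 : ℚ) ≤ (r : ℚ) := by exact_mod_cast hr
    have hden : (2 * (r : ℚ) ^ 2 + 2 * r - 1) ≠ 0 := by nlinarith
    have hval : gammaR r * ((Q'.ncard : ℚ) - 1) = ((((r ^ 2 : ℕ) : ℤ) + r - 1 : ℤ) : ℚ) := by
      rw [hQcard, gammaR]
      push_cast
      field_simp
      exact mul_div_cancel_right₀ _ (by intro h; apply hden; nlinarith [h])
    rw [hval, Int.ceil_intCast]
  have hrsq : r ≤ r ^ 2 := Nat.le_self_pow two_ne_zero r
  refine ⟨Q', ⟨?_, ?_⟩, ?_⟩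
  · -- connectivity
    have hr2 : 0 < r ^ 2 := by positivity
    set a0 : GadgetV V r := iota1 ⟨0, hr2⟩ with ha0def
    have ha0 : a0 ∈ Q' := hsub1 ⟨_, rfl⟩
    have key : ∀ z : Q', ((gadget G' r).induce Q').Reachable ⟨a0, ha0⟩ z := by
      intro z
      rcases eq_or_ne (z : GadgetV V r) a0 with h | h
      · have : z = ⟨a0, ha0⟩ := Subtype.ext h
        rw [this]
      · refine SimpleGraph.Adj.reachable ?_
        show (gadget G' r).Adj a0 (z : GadgetV V r)
        exact (adj_iota1 G' _ _).mpr h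
    have : Nonempty (Q' : Set (GadgetV V r)) := ⟨⟨a0, ha0⟩⟩
    exact SimpleGraph.Connected.mk fun x y => (key x).symm.trans (key y)
  · -- degree condition
    intro v hv
    rw [hceil]
    rcases v with u | i | i | i
    · -- v = inl u, u ∈ L
      have hu : u ∈ L := by
        rcases hv with hv | ⟨w, hw, hweq⟩
        · exact absurd hv (inl_not_mem_Xset u)
        · rwa [← Sum.inl_injective hweq]
      have hset : Q' ∩ (gadget G' r).neighborSet (Sum.inl u) =
          Set.range iota1 ∪ Sum.inl '' ((↑L : Set V) \ {u}) := by
        ext x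
        rw [Set.mem_inter_iff, SimpleGraph.mem_neighborSet, adj_inl, isA1_iff]
        constructor
        · rintro ⟨hxQ, h | ⟨w, rfl, hadj⟩⟩
          · exact Or.inl h
          · have hwL : w ∈ L := by
              rcases hxQ with hx | ⟨w', hw', hw'eq⟩
              · exact absurd hx (inl_not_mem_Xset w)
              · rwa [← Sum.inl_injective hw'eq]
            exact Or.inr ⟨w, ⟨hwL, hadj.ne'⟩, rfl⟩
        · rintro (h | ⟨w, ⟨hwL, hwne⟩, rfl⟩)
          · exact ⟨hsub1 h, Or.inl h⟩
          · exact ⟨Or.inr ⟨w, hwL, rfl⟩,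
              Or.inr ⟨w, rfl, hL.1 hu hwL (Ne.symm hwne)⟩⟩
      have hdisj : Disjoint (Set.range (iota1 (V := V) (r := r)))
          (Sum.inl '' ((↑L : Set V) \ {u})) := by
        rw [Set.disjoint_left]; rintro _ ⟨i, rfl⟩ ⟨w, hw, hweq⟩
        simp [iota1] at hweq
      have hdeg : degIn (gadget G' r) Q' (Sum.inl u) = r ^ 2 + (r - 1) := by
        rw [degIn, hset, Set.ncard_union_eq hdisj (Set.toFinite _) (Set.toFinite _),
          ncard_range_iota1, Set.ncard_image_of_injective _ Sum.inl_injective,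
          Set.ncard_diff_singleton_of_mem (by exact_mod_cast hu),
          Set.ncard_coe_finset, hL.2]
      rw [hdeg]
      generalize r ^ 2 = s at hrsq ⊢
      omega
    · -- v ∈ A₁
      have hvQ : iota1 i ∈ Q' := hsub1 ⟨i, rfl⟩
      have hset : Q' ∩ (gadget G' r).neighborSet (iota1 i) = Q' \ {iota1 i} := by
        ext x
        rw [Set.mem_inter_iff, SimpleGraph.mem_neighborSet, adj_iota1]
        simp only [Set.mem_diff, Set.mem_singleton_iff]
      have hdeg : degIn (gadget G' r) Q' (iota1 i) = 2 * r ^ 2 + 2 * r - 1 := by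
        rw [degIn, hset, Set.ncard_diff_singleton_of_mem hvQ, hQcard]
      show _ ≤ ((degIn (gadget G' r) Q' (iota1 i) : ℕ) : ℤ)
      rw [hdeg]
      generalize r ^ 2 = s at hrsq ⊢
      omega
    · -- v ∈ A₂
      have hset : Q' ∩ (gadget G' r).neighborSet (iota2 i) =
          Set.range iota1 ∪ (Set.range iota2 \ {iota2 i}) := by
        ext x
        rw [Set.mem_inter_iff, SimpleGraph.mem_neighborSet, adj_iota2, isA1_iff, isA2_iff]
        constructor
        · rintro ⟨hxQ, h | ⟨h, hne⟩⟩
          · exact Or.inl h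
          · exact Or.inr ⟨h, hne⟩
        · rintro (h | ⟨h, hne⟩)
          · exact ⟨hsub1 h, Or.inl h⟩
          · exact ⟨hsub2 h, Or.inr ⟨h, hne⟩⟩
      have hdisj : Disjoint (Set.range (iota1 (V := V) (r := r)))
          (Set.range iota2 \ {iota2 i}) := by
        rw [Set.disjoint_left]; rintro _ ⟨j, rfl⟩ ⟨⟨k, hk⟩, -⟩
        simp [iota1, iota2] at hk
      have hdeg : degIn (gadget G' r) Q' (iota2 i) = r ^ 2 + (r ^ 2 - 1) := by
        rw [degIn, hset, Set.ncard_union_eq hdisj (Set.toFinite _) (Set.toFinite _),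
          ncard_range_iota1, Set.ncard_diff_singleton_of_mem (Set.mem_range_self i),
          ncard_range_iota2]
      show _ ≤ ((degIn (gadget G' r) Q' (iota2 i) : ℕ) : ℤ)
      rw [hdeg]
      generalize r ^ 2 = s at hrsq ⊢
      omega
    · -- v ∈ B
      have hset : Q' ∩ (gadget G' r).neighborSet (iota3 i) =
          Set.range iota1 ∪ (Set.range iota3 \ {iota3 i}) := by
        ext x
        rw [Set.mem_inter_iff, SimpleGraph.mem_neighborSet, adj_iota3, isA1_iff, isB_iff]
        constructor
        · rintro ⟨hxQ, h | ⟨h, hne⟩⟩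
          · exact Or.inl h
          · exact Or.inr ⟨h, hne⟩
        · rintro (h | ⟨h, hne⟩)
          · exact ⟨hsub1 h, Or.inl h⟩
          · exact ⟨hsub3 h, Or.inr ⟨h, hne⟩⟩
      have hdisj : Disjoint (Set.range (iota1 (V := V) (r := r)))
          (Set.range iota3 \ {iota3 i}) := by
        rw [Set.disjoint_left]; rintro _ ⟨j, rfl⟩ ⟨⟨k, hk⟩, -⟩
        simp [iota1, iota3] at hk
      have hdeg : degIn (gadget G' r) Q' (iota3 i) = r ^ 2 + (r - 1) := by
        rw [degIn, hset, Set.ncard_union_eq hdisj (Set.toFinite _) (Set.toFinite _),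
          ncard_range_iota1, Set.ncard_diff_singleton_of_mem (Set.mem_range_self i),
          ncard_range_iota3]
      show _ ≤ ((degIn (gadget G' r) Q' (iota3 i) : ℕ) : ℤ)
      rw [hdeg]
      generalize r ^ 2 = s at hrsq ⊢
      omega
  · -- strict inclusion
    refine (Set.ssubset_iff_of_subset Set.subset_union_left).mpr
      ⟨Sum.inl u0, Or.inr ⟨u0, hu0, rfl⟩, inl_not_mem_Xset u0⟩
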